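/- Let P be a poset, 𝓜, 𝓝 minimal subset selections on P, and x, y ∈ P. Then x ≪_𝓜𝓝 y if and only if for every net (x_i)_{i∈I} in P, if (x_i) 𝓜𝓝-converges to y then x_i ∈ ↑x eventually. -/

import Mathlib

universe u

/-- A directed preordered index for a net. -/
structure IsDirNet {I : Type u} (r : I → I → Prop) : Prop where
  refl : ∀ i, r i i
  trans : ∀ {i j k : I}, r i j → r j k → r i k
  nonempty : Nonempty I
  directed : ∀ i j, ∃ k, r i k ∧ r j k

/-- A minimal subset selection on a poset `P`. -/
def MinSel {P : Type u} [PartialOrder P] (M : Set (Set P)) : Prop :=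
  (∅ : Set P) ∉ M ∧ ∀ x : P, {x} ∈ M

/-- The net `f : I → P` `𝓜𝓝`-converges to `x`. -/
def MNConv {P : Type u} [PartialOrder P] (M N : Set (Set P))
    {I : Type u} (r : I → I → Prop) (f : I → P) (x : P) : Prop :=
  ∃ A S : Set P, A ∈ M ∧ S ∈ N ∧ IsLUB A x ∧ IsGLB S x ∧
    ∀ a ∈ A, ∀ s ∈ S, ∃ i₀, ∀ i, r i₀ i → a ≤ f i ∧ f i ≤ s

/-- The topology `τ_𝓜𝓝` induced by `𝓜𝓝`-convergence. -/
def mnTop {P : Type u} [PartialOrder P] (M N : Set (Set P)) : Set (Set P) :=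
  {U | ∀ (I : Type u) (r : I → I → Prop) (f : I → P) (x : P),
      IsDirNet r → MNConv M N r f x → x ∈ U → ∃ i₀, ∀ i, r i₀ i → f i ∈ U}

/-- The `𝓜𝓝`-convergence structure is topological. -/
def MNTopological {P : Type u} [PartialOrder P] (M N : Set (Set P)) : Prop :=
  ∀ (I : Type u) (r : I → I → Prop) (f : I → P) (x : P), IsDirNet r →
    (∀ U ∈ mnTop M N, x ∈ U → ∃ i₀, ∀ i, r i₀ i → f i ∈ U) →
    MNConv M N r f x

/-- The relation `x ≪_𝓜𝓝 y`. -/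
def wbMN {P : Type u} [PartialOrder P] (M N : Set (Set P)) (x y : P) : Prop :=
  ∀ A S : Set P, A ∈ M → S ∈ N → IsLUB A y → IsGLB S y →
    ∃ B T : Set P, B.Nonempty ∧ B.Finite ∧ B ⊆ A ∧ T.Nonempty ∧ T.Finite ∧ T ⊆ S ∧
      upperBounds B ∩ lowerBounds T ⊆ Set.Ici x

/-- The relation `y ◁_𝓜𝓝 z`. -/
def triMN {P : Type u} [PartialOrder P] (M N : Set (Set P)) (y z : P) : Prop :=
  ∀ A S : Set P, A ∈ M → S ∈ N → IsLUB A y → IsGLB S y →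
    ∃ B T : Set P, B.Nonempty ∧ B.Finite ∧ B ⊆ A ∧ T.Nonempty ∧ T.Finite ∧ T ⊆ S ∧
      upperBounds B ∩ lowerBounds T ⊆ Set.Iic z

/-- `𝓜𝓝`-continuity of the poset `P`. -/
def MNCont {P : Type u} [PartialOrder P] (M N : Set (Set P)) : Prop :=
  ∀ x y : P,
    (∃ A S : Set P, A ∈ M ∧ S ∈ N ∧ A ⊆ {w | wbMN M N w x} ∧
      S ⊆ {w | triMN M N x w} ∧ IsLUB A x ∧ IsGLB S x) ∧
    ({w | wbMN M N x w} ∩ {w | triMN M N w y}) ∈ mnTop M N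

theorem eventually_forall_aux {I Q : Type u} {r : I → I → Prop} (h : IsDirNet r)
    {B : Set Q} (hB : B.Finite) {p : Q → I → Prop}
    (hp : ∀ a ∈ B, ∃ i₀, ∀ i, r i₀ i → p a i) :
    ∃ i₀, ∀ i, r i₀ i → ∀ a ∈ B, p a i := by
  refine Set.Finite.induction_on (motive := fun B _ =>
      (∀ a ∈ B, ∃ i₀, ∀ i, r i₀ i → p a i) →
      ∃ i₀, ∀ i, r i₀ i → ∀ a ∈ B, p a i) B hB ?_ ?_ hp
  · intro _; obtain ⟨k⟩ := h.nonempty; exact ⟨k, by simp⟩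
  · intro a s ha hs ih hp'
    obtain ⟨k, hk⟩ := ih (fun b hb => hp' b (Set.mem_insert_of_mem _ hb))
    obtain ⟨k', hk'⟩ := hp' a (Set.mem_insert _ _)
    obtain ⟨m, hm1, hm2⟩ := h.directed k k'
    refine ⟨m, fun i hi => ?_⟩
    rintro b (rfl | hb)
    · exact hk' i (h.trans hm2 hi)
    · exact hk i (h.trans hm1 hi) b hb

/-- Net characterisation of `x ≪_𝓜𝓝 y`. -/
theorem stmt_11 {P : Type u} [PartialOrder P] (M N : Set (Set P))
    (hM : MinSel M) (hN : MinSel N) (x y : P) :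
    wbMN M N x y ↔
      ∀ (I : Type u) (r : I → I → Prop) (f : I → P), IsDirNet r →
        MNConv M N r f y → ∃ i₀, ∀ i, r i₀ i → x ≤ f i := by
  constructor
  · intro hwb I r f hdir hconv
    obtain ⟨A, S, hA, hS, hlA, hgS, hev⟩ := hconv
    obtain ⟨B, T, hBne, hBfin, hBA, hTne, hTfin, hTS, hsub⟩ := hwb A S hA hS hlA hgS
    obtain ⟨a₀, ha₀⟩ := hBne
    obtain ⟨s₀, hs₀⟩ := hTne
    obtain ⟨k₁, hk₁⟩ := eventually_forall_aux hdir hBfin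
      (p := fun a i => a ≤ f i)
      (fun a ha => (hev a (hBA ha) s₀ (hTS hs₀)).imp fun i0 hi0 i hi => (hi0 i hi).1)
    obtain ⟨k₂, hk₂⟩ := eventually_forall_aux hdir hTfin
      (p := fun s i => f i ≤ s)
      (fun s hs => (hev a₀ (hBA ha₀) s (hTS hs)).imp fun i0 hi0 i hi => (hi0 i hi).2)
    obtain ⟨m, hm1, hm2⟩ := hdir.directed k₁ k₂
    refine ⟨m, fun i hi => hsub ⟨?_, ?_⟩⟩
    · exact fun a ha => hk₁ i (hdir.trans hm1 hi) a ha
    · exact fun s hs => hk₂ i (hdir.trans hm2 hi) s hs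
  · intro hnet
    by_contra hwb
    unfold wbMN at hwb
    push_neg at hwb
    obtain ⟨A, S, hA, hS, hlA, hgS, hbad⟩ := hwb
    -- for each admissible pair (B,T), a witness outside ↑x
    have hwit : ∀ B T : Set P, B.Nonempty → B.Finite → B ⊆ A → T.Nonempty → T.Finite →
        T ⊆ S → ∃ z, z ∈ upperBounds B ∧ z ∈ lowerBounds T ∧ ¬ x ≤ z := by
      intro B T h1 h2 h3 h4 h5 h6
      have := hbad B T h1 h2 h3 h4 h5 h6
      by_contra hc
      push_neg at hc
      exact this fun z hz => hc z hz.1 hz.2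
    set I := {p : Set P × Set P //
        p.1.Nonempty ∧ p.1.Finite ∧ p.1 ⊆ A ∧ p.2.Nonempty ∧ p.2.Finite ∧ p.2 ⊆ S} with hI
    set r : I → I → Prop := fun p q => p.1.1 ⊆ q.1.1 ∧ p.1.2 ⊆ q.1.2 with hr
    have hAne : A.Nonempty := by
      rcases A.eq_empty_or_nonempty with h | h
      · exact absurd (h ▸ hA) hM.1
      · exact h
    have hSne : S.Nonempty := by
      rcases S.eq_empty_or_nonempty with h | h
      · exact absurd (h ▸ hS) hN.1
      · exact h
    obtain ⟨a₁, ha₁⟩ := hAne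
    obtain ⟨s₁, hs₁⟩ := hSne
    have hdir : IsDirNet r := by
      refine ⟨fun i => ⟨subset_rfl, subset_rfl⟩,
        fun h1 h2 => ⟨h1.1.trans h2.1, h1.2.trans h2.2⟩,
        ⟨⟨({a₁}, {s₁}), ⟨a₁, rfl⟩, Set.finite_singleton _, by simpa using ha₁,
          ⟨s₁, rfl⟩, Set.finite_singleton _, by simpa using hs₁⟩⟩,
        fun i j => ?_⟩
      refine ⟨⟨(i.1.1 ∪ j.1.1, i.1.2 ∪ j.1.2), ?_⟩, ?_, ?_⟩
      · exact ⟨i.2.1.mono Set.subset_union_left, i.2.2.1.union j.2.2.1,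
          Set.union_subset i.2.2.2.1 j.2.2.2.1,
          i.2.2.2.2.1.mono Set.subset_union_left, i.2.2.2.2.2.1.union j.2.2.2.2.2.1,
          Set.union_subset i.2.2.2.2.2.2 j.2.2.2.2.2.2⟩
      · exact ⟨Set.subset_union_left, Set.subset_union_left⟩
      · exact ⟨Set.subset_union_right, Set.subset_union_right⟩
    choose g hg1 hg2 hg3 using fun i : I =>
      hwit i.1.1 i.1.2 i.2.1 i.2.2.1 i.2.2.2.1 i.2.2.2.2.1 i.2.2.2.2.2.1 i.2.2.2.2.2.2
    have hconv : MNConv M N r g y := by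
      refine ⟨A, S, hA, hS, hlA, hgS, fun a ha s hs => ?_⟩
      refine ⟨⟨({a}, {s}), ⟨a, rfl⟩, Set.finite_singleton _, by simpa using ha,
        ⟨s, rfl⟩, Set.finite_singleton _, by simpa using hs⟩, fun i hi => ?_⟩
      exact ⟨hg1 i (hi.1 rfl), hg2 i (hi.2 rfl)⟩
    obtain ⟨i₀, hi₀⟩ := hnet I r g hdir hconv
    exact hg3 i₀ (hi₀ i₀ (hdir.refl i₀))
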